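/- Let G be a connected graph on n vertices with minimum degree at least d ≥ 2 such that 8d ≤ 3n ≤ 9d, and suppose there exist vertices v₃, v₄ at distance 1 with B_2(v₃) ∪ B_2(v₄) = V(G), where v₃, v₄ lie on a geodesic path v₁…v₆ of length 5. Let A = B_2(v₃) ∖ B_2(v₄) and C = B_2(v₄) ∖ B_2(v₃), with a = |A|, c = |C|. Then a ≤ n − 2(d+1) and c ≤ n − 2(d+1), and the degree sum of G^4 is at least n(n−1) − 2ac ≥ (7/3)d·n. -/

import Mathlib

/-- The `k`-th power of a simple graph `G`: two distinct vertices are adjacent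
iff their distance in `G` is at most `k`. -/
def SimpleGraph.power {V : Type*} (G : SimpleGraph V) (k : ℕ) : SimpleGraph V where
  Adj u v := u ≠ v ∧ G.dist u v ≤ k
  symm := ⟨fun u v h => ⟨h.1.symm, by rw [SimpleGraph.dist_comm]; exact h.2⟩⟩
  loopless := ⟨fun v h => h.1 rfl⟩

private lemma arith_aux (d n a c : ℝ) (hd : 2 ≤ d) (h8 : 8 * d ≤ 3 * n)
    (h9 : 3 * n ≤ 9 * d) (ha0 : 0 ≤ a) (hc0 : 0 ≤ c)
    (ha : a ≤ n - 2 * (d + 1)) (hc : c ≤ n - 2 * (d + 1)) :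
    7 / 3 * d * n ≤ n * (n - 1) - 2 * a * c := by
  nlinarith [mul_nonneg ha0 hc0, sq_nonneg (n - 2 * (d + 1)),
    mul_nonneg (sub_nonneg.2 ha) (sub_nonneg.2 hc),
    mul_nonneg (sub_nonneg.2 ha) hc0, mul_nonneg ha0 (sub_nonneg.2 hc),
    mul_nonneg (by linarith : (0:ℝ) ≤ 3 * n - 8 * d) (by linarith : (0:ℝ) ≤ 9 * d - 3 * n),
    mul_nonneg (by linarith : (0:ℝ) ≤ n - 2 * (d + 1)) (by linarith : (0:ℝ) ≤ 9 * d - 3 * n),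
    mul_nonneg (by linarith : (0:ℝ) ≤ n - 2 * (d + 1)) (by linarith : (0:ℝ) ≤ 3 * n - 8 * d),
    mul_nonneg (by linarith : (0:ℝ) ≤ d - 2) (by linarith : (0:ℝ) ≤ n - 2 * (d + 1))]

theorem boundary_case_detail {V : Type*} [Fintype V] (G : SimpleGraph V) (d : ℕ)
    (hd : 2 ≤ d) (hconn : G.Connected) (hmin : ∀ v : V, d ≤ (G.neighborSet v).ncard)
    (hn1 : 8 * d ≤ 3 * Fintype.card V) (hn2 : 3 * Fintype.card V ≤ 9 * d)
    (w : Fin 6 → V)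
    (hgeo : ∀ i j : Fin 6, G.dist (w i) (w j) = ((i : ℤ) - (j : ℤ)).natAbs)
    (hcov : {x : V | G.dist x (w 2) ≤ 2} ∪ {x : V | G.dist x (w 3) ≤ 2} = Set.univ) :
    (({x : V | G.dist x (w 2) ≤ 2} \ {x : V | G.dist x (w 3) ≤ 2}).ncard : ℝ) ≤
        Fintype.card V - 2 * (d + 1) ∧
    (({x : V | G.dist x (w 3) ≤ 2} \ {x : V | G.dist x (w 2) ≤ 2}).ncard : ℝ) ≤
        Fintype.card V - 2 * (d + 1) ∧
    (Fintype.card V : ℝ) * (Fintype.card V - 1) -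
        2 * ({x : V | G.dist x (w 2) ≤ 2} \ {x : V | G.dist x (w 3) ≤ 2}).ncard *
          ({x : V | G.dist x (w 3) ≤ 2} \ {x : V | G.dist x (w 2) ≤ 2}).ncard ≤
      ∑ x : V, (((G.power 4).neighborSet x).ncard : ℝ) ∧
    (7 / 3 * d * Fintype.card V : ℝ) ≤
      (Fintype.card V : ℝ) * (Fintype.card V - 1) -
        2 * ({x : V | G.dist x (w 2) ≤ 2} \ {x : V | G.dist x (w 3) ≤ 2}).ncard *
          ({x : V | G.dist x (w 3) ≤ 2} \ {x : V | G.dist x (w 2) ≤ 2}).ncard := by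
  classical
  have htri : ∀ x y z : V, G.dist x z ≤ G.dist x y + G.dist y z :=
    fun x y z => hconn.dist_triangle
  have hdc : ∀ x y : V, G.dist x y = G.dist y x := fun x y => SimpleGraph.dist_comm
  set n := Fintype.card V with hn
  set S2 : Set V := {x : V | G.dist x (w 2) ≤ 2} with hS2
  set S3 : Set V := {x : V | G.dist x (w 3) ≤ 2} with hS3
  set A : Set V := S2 \ S3 with hA
  set C : Set V := S3 \ S2 with hC
  have h05 : G.dist (w 0) (w 5) = 5 := by simpa using hgeo 0 5
  have h03 : G.dist (w 0) (w 3) = 3 := by simpa using hgeo 0 3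
  have h02 : G.dist (w 0) (w 2) = 2 := by simpa using hgeo 0 2
  have h23 : G.dist (w 2) (w 3) = 1 := by rw [hgeo 2 3]; decide
  have h25 : G.dist (w 2) (w 5) = 3 := by simpa using hgeo 2 5
  have h35 : G.dist (w 3) (w 5) = 2 := by simpa using hgeo 3 5
  have hcov' : ∀ x : V, G.dist x (w 2) ≤ 2 ∨ G.dist x (w 3) ≤ 2 := by
    intro x
    have hx : x ∈ S2 ∪ S3 := by rw [hS2, hS3, hcov]; trivial
    exact hx
  -- closed balls of radius one
  have hball : ∀ u : V, d + 1 ≤ {x : V | G.dist x u ≤ 1}.ncard := by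
    intro u
    have hsub : insert u (G.neighborSet u) ⊆ {x : V | G.dist x u ≤ 1} := by
      intro x hx
      rcases hx with rfl | hx
      · simp [SimpleGraph.dist_self]
      · have : G.dist x u = 1 := SimpleGraph.dist_eq_one_iff_adj.2 hx.symm
        simp [Set.mem_setOf_eq, this]
    have h1 : (insert u (G.neighborSet u)).ncard = (G.neighborSet u).ncard + 1 :=
      Set.ncard_insert_of_notMem (by simp) (Set.toFinite _)
    have h2 : (insert u (G.neighborSet u)).ncard ≤ {x : V | G.dist x u ≤ 1}.ncard :=
      Set.ncard_le_ncard hsub (Set.toFinite _)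
    have := hmin u
    omega
  -- no three vertices pairwise at distance ≥ 3
  have htriple : ∀ x y z : V, 3 ≤ G.dist x y → 3 ≤ G.dist x z → 3 ≤ G.dist y z → False := by
    intro x y z hxy hxz hyz
    set Bx : Set V := {v : V | G.dist v x ≤ 1} with hBx
    set By : Set V := {v : V | G.dist v y ≤ 1} with hBy
    set Bz : Set V := {v : V | G.dist v z ≤ 1} with hBz
    have hdisj : ∀ (p q : V), 3 ≤ G.dist p q →
        Disjoint {v : V | G.dist v p ≤ 1} {v : V | G.dist v q ≤ 1} := by
      intro p q hpq
      rw [Set.disjoint_left]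
      intro v hv1 hv2
      simp only [Set.mem_setOf_eq] at hv1 hv2
      have : G.dist p q ≤ G.dist p v + G.dist v q := htri p v q
      rw [hdc p v] at this
      omega
    have hd1 : Disjoint Bx By := hdisj x y hxy
    have hd2 : Disjoint Bx Bz := hdisj x z hxz
    have hd3 : Disjoint By Bz := hdisj y z hyz
    have hu1 : (By ∪ Bz).ncard = By.ncard + Bz.ncard :=
      Set.ncard_union_eq hd3 (Set.toFinite _) (Set.toFinite _)
    have hu2 : (Bx ∪ (By ∪ Bz)).ncard = Bx.ncard + (By ∪ Bz).ncard :=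
      Set.ncard_union_eq (Set.disjoint_union_right.2 ⟨hd1, hd2⟩)
        (Set.toFinite _) (Set.toFinite _)
    have hle : (Bx ∪ (By ∪ Bz)).ncard ≤ n := by
      have := Set.ncard_le_ncard (Set.subset_univ (Bx ∪ (By ∪ Bz))) (Set.toFinite _)
      rwa [Set.ncard_univ, Nat.card_eq_fintype_card] at this
    have b1 : d + 1 ≤ Bx.ncard := hball x
    have b2 : d + 1 ≤ By.ncard := hball y
    have b3 : d + 1 ≤ Bz.ncard := hball z
    omega
  -- every vertex at distance ≤ 1 from w5 is in S3
  have hw5 : ∀ y : V, G.dist y (w 5) ≤ 1 → y ∈ S3 := by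
    intro y hy
    by_contra hy3
    have hy3' : 3 ≤ G.dist y (w 3) := by
      simp only [hS3, Set.mem_setOf_eq] at hy3; omega
    have h0y : 3 ≤ G.dist (w 0) y := by
      have := htri (w 0) y (w 5)
      omega
    exact htriple (w 0) (w 3) y (by omega) h0y (by rw [hdc]; omega)
  -- every vertex at distance ≤ 1 from w0 is in S2
  have hw0 : ∀ y : V, G.dist y (w 0) ≤ 1 → y ∈ S2 := by
    intro y hy
    by_contra hy2
    have hy2' : 3 ≤ G.dist y (w 2) := by
      simp only [hS2, Set.mem_setOf_eq] at hy2; omega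
    have h5y : 3 ≤ G.dist y (w 5) := by
      have t := htri (w 0) y (w 5)
      rw [hdc (w 0) y] at t
      omega
    exact htriple y (w 2) (w 5) hy2' h5y (by omega)
  -- the two ball-bounds
  have hboundA : A.ncard + 2 * (d + 1) ≤ n := by
    have hsub2 : {x : V | G.dist x (w 2) ≤ 1} ⊆ S3 := by
      intro x hx
      simp only [Set.mem_setOf_eq] at hx
      have := htri x (w 2) (w 3)
      show G.dist x (w 3) ≤ 2
      omega
    have hsub5 : {x : V | G.dist x (w 5) ≤ 1} ⊆ S3 := fun x hx => hw5 x hx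
    have hdisj : Disjoint {x : V | G.dist x (w 2) ≤ 1} {x : V | G.dist x (w 5) ≤ 1} := by
      rw [Set.disjoint_left]
      intro v hv1 hv2
      simp only [Set.mem_setOf_eq] at hv1 hv2
      have := htri (w 2) v (w 5)
      rw [hdc (w 2) v] at this
      omega
    have hUcard : ({x : V | G.dist x (w 2) ≤ 1} ∪ {x : V | G.dist x (w 5) ≤ 1}).ncard
        = {x : V | G.dist x (w 2) ≤ 1}.ncard + {x : V | G.dist x (w 5) ≤ 1}.ncard :=
      Set.ncard_union_eq hdisj (Set.toFinite _) (Set.toFinite _)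
    have hAU : Disjoint A ({x : V | G.dist x (w 2) ≤ 1} ∪ {x : V | G.dist x (w 5) ≤ 1}) := by
      rw [Set.disjoint_left]
      intro v hv1 hv2
      exact hv1.2 ((Set.union_subset hsub2 hsub5) hv2)
    have hsum : (A ∪ ({x : V | G.dist x (w 2) ≤ 1} ∪ {x : V | G.dist x (w 5) ≤ 1})).ncard
        = A.ncard + ({x : V | G.dist x (w 2) ≤ 1} ∪ {x : V | G.dist x (w 5) ≤ 1}).ncard :=
      Set.ncard_union_eq hAU (Set.toFinite _) (Set.toFinite _)
    have hle : (A ∪ ({x : V | G.dist x (w 2) ≤ 1} ∪ {x : V | G.dist x (w 5) ≤ 1})).ncard ≤ n := by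
      have := Set.ncard_le_ncard
        (Set.subset_univ (A ∪ ({x : V | G.dist x (w 2) ≤ 1} ∪ {x : V | G.dist x (w 5) ≤ 1})))
        (Set.toFinite _)
      rwa [Set.ncard_univ, Nat.card_eq_fintype_card] at this
    have b1 := hball (w 2)
    have b2 := hball (w 5)
    omega
  have hboundC : C.ncard + 2 * (d + 1) ≤ n := by
    have hsub3 : {x : V | G.dist x (w 3) ≤ 1} ⊆ S2 := by
      intro x hx
      simp only [Set.mem_setOf_eq] at hx
      have := htri x (w 3) (w 2)
      rw [hdc (w 3) (w 2)] at this
      show G.dist x (w 2) ≤ 2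
      omega
    have hsub0 : {x : V | G.dist x (w 0) ≤ 1} ⊆ S2 := fun x hx => hw0 x hx
    have hdisj : Disjoint {x : V | G.dist x (w 3) ≤ 1} {x : V | G.dist x (w 0) ≤ 1} := by
      rw [Set.disjoint_left]
      intro v hv1 hv2
      simp only [Set.mem_setOf_eq] at hv1 hv2
      have := htri (w 3) v (w 0)
      rw [hdc (w 3) v] at this
      rw [hdc (w 0) (w 3)] at h03
      omega
    have hUcard : ({x : V | G.dist x (w 3) ≤ 1} ∪ {x : V | G.dist x (w 0) ≤ 1}).ncard
        = {x : V | G.dist x (w 3) ≤ 1}.ncard + {x : V | G.dist x (w 0) ≤ 1}.ncard :=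
      Set.ncard_union_eq hdisj (Set.toFinite _) (Set.toFinite _)
    have hCU : Disjoint C ({x : V | G.dist x (w 3) ≤ 1} ∪ {x : V | G.dist x (w 0) ≤ 1}) := by
      rw [Set.disjoint_left]
      intro v hv1 hv2
      exact hv1.2 ((Set.union_subset hsub3 hsub0) hv2)
    have hsum : (C ∪ ({x : V | G.dist x (w 3) ≤ 1} ∪ {x : V | G.dist x (w 0) ≤ 1})).ncard
        = C.ncard + ({x : V | G.dist x (w 3) ≤ 1} ∪ {x : V | G.dist x (w 0) ≤ 1}).ncard :=
      Set.ncard_union_eq hCU (Set.toFinite _) (Set.toFinite _)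
    have hle : (C ∪ ({x : V | G.dist x (w 3) ≤ 1} ∪ {x : V | G.dist x (w 0) ≤ 1})).ncard ≤ n := by
      have := Set.ncard_le_ncard
        (Set.subset_univ (C ∪ ({x : V | G.dist x (w 3) ≤ 1} ∪ {x : V | G.dist x (w 0) ≤ 1})))
        (Set.toFinite _)
      rwa [Set.ncard_univ, Nat.card_eq_fintype_card] at this
    have b1 := hball (w 3)
    have b2 := hball (w 0)
    omega
  -- far pairs are A-C pairs
  have hfar : ∀ x y : V, x ≠ y → ¬ (G.power 4).Adj x y →
      (x ∈ A ∧ y ∈ C) ∨ (x ∈ C ∧ y ∈ A) := by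
    intro x y hxy hnadj
    have h5 : ¬ G.dist x y ≤ 4 := by
      intro h
      exact hnadj ⟨hxy, h⟩
    have hnot2 : ¬ (x ∈ S2 ∧ y ∈ S2) := by
      rintro ⟨hx, hy⟩
      have := htri x (w 2) y
      rw [hdc (w 2) y] at this
      simp only [hS2, Set.mem_setOf_eq] at hx hy
      omega
    have hnot3 : ¬ (x ∈ S3 ∧ y ∈ S3) := by
      rintro ⟨hx, hy⟩
      have := htri x (w 3) y
      rw [hdc (w 3) y] at this
      simp only [hS3, Set.mem_setOf_eq] at hx hy
      omega
    rcases hcov' x with hx2 | hx3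
    · rcases hcov' y with hy2 | hy3
      · exact absurd ⟨hx2, hy2⟩ hnot2
      · left
        refine ⟨⟨hx2, fun hx3 => hnot3 ⟨hx3, hy3⟩⟩, ⟨hy3, fun hy2 => hnot2 ⟨hx2, hy2⟩⟩⟩
    · rcases hcov' y with hy2 | hy3
      · right
        refine ⟨⟨hx3, fun hx2 => hnot2 ⟨hx2, hy2⟩⟩, ⟨hy2, fun hy3 => hnot3 ⟨hx3, hy3⟩⟩⟩
      · exact absurd ⟨hx3, hy3⟩ hnot3
  -- non-neighbour sets
  set M : V → Set V := fun x => {y : V | y ≠ x ∧ ¬ (G.power 4).Adj x y} with hM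
  have hnbr : ∀ x : V, ((G.power 4).neighborSet x).ncard + (1 + (M x).ncard) = n := by
    intro x
    have hx : x ∉ M x := by simp [hM]
    have hins : (insert x (M x)).ncard = (M x).ncard + 1 :=
      Set.ncard_insert_of_notMem hx (Set.toFinite _)
    have hset : (G.power 4).neighborSet x = Set.univ \ insert x (M x) := by
      ext y
      simp only [SimpleGraph.mem_neighborSet, Set.mem_diff, Set.mem_univ, true_and,
        Set.mem_insert_iff, hM, Set.mem_setOf_eq]
      constructor
      · intro hadj
        have hne : y ≠ x := hadj.1.symm
        push_neg
        exact ⟨hne, fun _ => hadj⟩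
      · intro hy
        push_neg at hy
        exact hy.2 hy.1
    have := Set.ncard_diff_add_ncard_of_subset
      (Set.subset_univ (insert x (M x))) (Set.toFinite _)
    rw [← hset] at this
    rw [Set.ncard_univ, Nat.card_eq_fintype_card] at this
    omega
  have hMempty : ∀ x : V, x ∉ A → x ∉ C → M x = ∅ := by
    intro x hxA hxC
    ext y
    simp only [hM, Set.mem_setOf_eq, Set.mem_empty_iff_false, iff_false, not_and]
    intro hyx hnadj
    rcases hfar x y (Ne.symm hyx) hnadj with ⟨hx, _⟩ | ⟨hx, _⟩
    · exact hxA hx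
    · exact hxC hx
  have hMA : ∀ x : V, x ∈ A → M x ⊆ C := by
    intro x hxA y hy
    rcases hfar x y (Ne.symm hy.1) hy.2 with ⟨_, hyC⟩ | ⟨hxC, _⟩
    · exact hyC
    · exact absurd hxA (fun h => hxC.2 h.1)
  have hMC : ∀ x : V, x ∈ C → M x ⊆ A := by
    intro x hxC y hy
    rcases hfar x y (Ne.symm hy.1) hy.2 with ⟨hxA, _⟩ | ⟨_, hyA⟩
    · exact absurd hxC (fun h => hxA.2 h.1)
    · exact hyA
  -- bound on the sum of |M x|
  have hAfin : A.Finite := Set.toFinite _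
  have hCfin : C.Finite := Set.toFinite _
  have hsumM : ∑ x : V, (M x).ncard ≤ A.ncard * C.ncard + C.ncard * A.ncard := by
    have hACdisj : Disjoint hAfin.toFinset hCfin.toFinset := by
      rw [Finset.disjoint_left]
      intro v hv1 hv2
      rw [Set.Finite.mem_toFinset] at hv1 hv2
      exact hv1.2 hv2.1
    have hstep : ∑ x : V, (M x).ncard
        = ∑ x ∈ hAfin.toFinset ∪ hCfin.toFinset, (M x).ncard := by
      symm
      apply Finset.sum_subset (Finset.subset_univ _)
      intro x _ hx
      rw [Finset.mem_union, Set.Finite.mem_toFinset, Set.Finite.mem_toFinset] at hx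
      push_neg at hx
      rw [hMempty x hx.1 hx.2]
      simp
    rw [hstep, Finset.sum_union hACdisj]
    have hA' : ∑ x ∈ hAfin.toFinset, (M x).ncard ≤ A.ncard * C.ncard := by
      calc ∑ x ∈ hAfin.toFinset, (M x).ncard
          ≤ ∑ _x ∈ hAfin.toFinset, C.ncard := by
            apply Finset.sum_le_sum
            intro x hx
            rw [Set.Finite.mem_toFinset] at hx
            exact Set.ncard_le_ncard (hMA x hx) (Set.toFinite _)
        _ = A.ncard * C.ncard := by
            rw [Finset.sum_const, smul_eq_mul, Set.ncard_eq_toFinset_card A hAfin]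
    have hC' : ∑ x ∈ hCfin.toFinset, (M x).ncard ≤ C.ncard * A.ncard := by
      calc ∑ x ∈ hCfin.toFinset, (M x).ncard
          ≤ ∑ _x ∈ hCfin.toFinset, A.ncard := by
            apply Finset.sum_le_sum
            intro x hx
            rw [Set.Finite.mem_toFinset] at hx
            exact Set.ncard_le_ncard (hMC x hx) (Set.toFinite _)
        _ = C.ncard * A.ncard := by
            rw [Finset.sum_const, smul_eq_mul, Set.ncard_eq_toFinset_card C hCfin]
    omega
  -- sum of degrees in ℕ
  have hsumdeg : ∑ x : V, ((G.power 4).neighborSet x).ncard + (n + ∑ x : V, (M x).ncard)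
      = n * n := by
    have h1 : ∑ x : V, (((G.power 4).neighborSet x).ncard + (1 + (M x).ncard)) = n * n := by
      rw [Finset.sum_congr rfl (fun x _ => hnbr x), Finset.sum_const, Finset.card_univ,
        smul_eq_mul, ← hn]
    rw [Finset.sum_add_distrib, Finset.sum_add_distrib, Finset.sum_const, Finset.card_univ,
      smul_eq_mul, mul_one, ← hn] at h1
    omega
  -- real versions
  have haR : (A.ncard : ℝ) ≤ (n : ℝ) - 2 * ((d : ℝ) + 1) := by
    have h := hboundA
    have : ((A.ncard + 2 * (d + 1) : ℕ) : ℝ) ≤ ((n : ℕ) : ℝ) := by exact_mod_cast h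
    push_cast at this
    linarith
  have hcR : (C.ncard : ℝ) ≤ (n : ℝ) - 2 * ((d : ℝ) + 1) := by
    have h := hboundC
    have : ((C.ncard + 2 * (d + 1) : ℕ) : ℝ) ≤ ((n : ℕ) : ℝ) := by exact_mod_cast h
    push_cast at this
    linarith
  have hdegR : (n : ℝ) * ((n : ℝ) - 1) - 2 * (A.ncard : ℝ) * (C.ncard : ℝ)
      ≤ ∑ x : V, (((G.power 4).neighborSet x).ncard : ℝ) := by
    have h1 : ((∑ x : V, ((G.power 4).neighborSet x).ncard : ℕ) : ℝ)
        + ((n : ℝ) + ((∑ x : V, (M x).ncard : ℕ) : ℝ)) = (n : ℝ) * n := by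
      exact_mod_cast congrArg (Nat.cast (R := ℝ)) hsumdeg
    have h2 : ((∑ x : V, (M x).ncard : ℕ) : ℝ)
        ≤ (A.ncard : ℝ) * (C.ncard : ℝ) + (C.ncard : ℝ) * (A.ncard : ℝ) := by
      exact_mod_cast hsumM
    have h3 : ∑ x : V, (((G.power 4).neighborSet x).ncard : ℝ)
        = ((∑ x : V, ((G.power 4).neighborSet x).ncard : ℕ) : ℝ) := by
      rw [Nat.cast_sum]
    rw [h3]
    linarith
  have hnR : 8 * (d : ℝ) ≤ 3 * (n : ℝ) := by exact_mod_cast hn1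
  have hnR2 : 3 * (n : ℝ) ≤ 9 * (d : ℝ) := by exact_mod_cast hn2
  have hdR : (2 : ℝ) ≤ (d : ℝ) := by exact_mod_cast hd
  have harith := arith_aux (d : ℝ) (n : ℝ) (A.ncard : ℝ) (C.ncard : ℝ) hdR hnR hnR2
    (Nat.cast_nonneg _) (Nat.cast_nonneg _) haR hcR
  exact ⟨haR, hcR, hdegR, by linarith [harith]⟩
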